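/- The geodesic γ(t) = λ(t,θ) z₁ + λ(1−t,θ) z₀ has constant Lorentzian speed |θ|: for every t ∈ ℝ, ⟨γ'(t), γ'(t)⟩_L = θ². In particular the Lorentzian length of γ restricted to [0,1], i.e. the Lorentzian distance from z₀ to z₁ along γ, equals |θ|. -/

import Mathlib

open RealInnerProductSpace

/-- The function `λ(x,θ)`: `sin(xθ)/sin(θ)` for `θ ≠ 0`, and `x` for `θ = 0`. -/
noncomputable def lam (x θ : ℝ) : ℝ := if θ = 0 then x else Real.sin (x * θ) / Real.sin θ

/-- The point `(u, cε) = (u₁, …, u_n, c, c) ∈ ℝ^{n+2}`. -/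
noncomputable def emb {n : ℕ} (u : EuclideanSpace ℝ (Fin n)) (c : ℝ) : Fin (n + 2) → ℝ :=
  fun i => if h : (i : ℕ) < n then u ⟨i, h⟩ else c

/-- The Lorentzian inner product `⟨v,w⟩_L = ∑_{i=1}^{n+1} vᵢwᵢ − v_{n+2}w_{n+2}` on `ℝ^{n+2}`. -/
noncomputable def lorentz {n : ℕ} (v w : Fin (n + 2) → ℝ) : ℝ :=
  (∑ i : Fin (n + 1), v i.castSucc * w i.castSucc) - v (Fin.last (n + 1)) * w (Fin.last (n + 1))

lemma lorentz_emb {n : ℕ} (u v : EuclideanSpace ℝ (Fin n)) (c d : ℝ) :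
    lorentz (emb u c) (emb v d) = ⟪u, v⟫ := by
  simp only [lorentz, emb, Fin.sum_univ_castSucc, PiLp.inner_apply, RCLike.inner_apply,
    conj_trivial, Fin.coe_castSucc, Fin.val_last]
  rw [dif_neg (lt_irrefl n), dif_neg (lt_irrefl n), dif_neg (by omega), dif_neg (by omega)]
  ring_nf
  refine Finset.sum_congr rfl fun i _ => ?_
  rw [dif_pos i.isLt, dif_pos i.isLt]
  exact mul_comm _ _

lemma lorentz_comb {n : ℕ} (a b : ℝ) (v w : Fin (n + 2) → ℝ) :
    lorentz (a • v + b • w) (a • v + b • w) =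
      a ^ 2 * lorentz v v + 2 * a * b * lorentz v w + b ^ 2 * lorentz w w := by
  simp only [lorentz, Pi.add_apply, Pi.smul_apply, smul_eq_mul, Finset.mul_sum]
  rw [Finset.sum_congr rfl (fun i _ => show (a * v i.castSucc + b * w i.castSucc) *
    (a * v i.castSucc + b * w i.castSucc) = a ^ 2 * (v i.castSucc * v i.castSucc) +
      2 * a * b * (v i.castSucc * w i.castSucc) + b ^ 2 * (w i.castSucc * w i.castSucc) by ring),
    Finset.sum_add_distrib, Finset.sum_add_distrib, ← Finset.mul_sum, ← Finset.mul_sum,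
    ← Finset.mul_sum]
  ring

lemma hasDerivAt_lam (θ x : ℝ) :
    HasDerivAt (fun s => lam s θ)
      (if θ = 0 then 1 else Real.cos (x * θ) * θ / Real.sin θ) x := by
  by_cases h : θ = 0
  · subst h
    simp only [lam, if_pos rfl]
    exact hasDerivAt_id x
  · simp only [lam, if_neg h]
    simpa using (((hasDerivAt_id x).mul_const θ).sin.div_const (Real.sin θ))

lemma cos_identity (A B : ℝ) :
    Real.cos A ^ 2 + Real.cos B ^ 2 - 2 * Real.cos A * Real.cos B * Real.cos (A + B)
      = Real.sin (A + B) ^ 2 := by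
  have hA := Real.sin_sq_add_cos_sq A
  have hB := Real.sin_sq_add_cos_sq B
  rw [Real.cos_add, Real.sin_add]
  nlinarith [hA, hB]

/-- The geodesic `γ(t) = λ(t,θ) z₁ + λ(1−t,θ) z₀` has constant Lorentzian speed `|θ|`:
`⟨γ'(t), γ'(t)⟩_L = θ²` for all `t`; in particular its Lorentzian length over `[0,1]`,
the Lorentzian distance from `z₀` to `z₁` along `γ`, equals `|θ|`. -/
theorem geodesic_constant_speed {n : ℕ} (hn : 1 ≤ n)
    (n₀ n₁ : EuclideanSpace ℝ (Fin n)) (c₀ c₁ : ℝ)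
    (hn₀ : ‖n₀‖ = 1) (hn₁ : ‖n₁‖ = 1) (hne : n₁ ≠ -n₀)
    (θ : ℝ) (hθ : θ ∈ Set.Ico 0 Real.pi) (hcos : Real.cos θ = ⟪n₀, n₁⟫)
    (γ : ℝ → Fin (n + 2) → ℝ)
    (hγ : ∀ t, γ t = lam t θ • emb n₁ c₁ + lam (1 - t) θ • emb n₀ c₀) :
    (∀ t : ℝ, lorentz (deriv γ t) (deriv γ t) = θ ^ 2) ∧
    (∫ t in (0 : ℝ)..1, Real.sqrt |lorentz (deriv γ t) (deriv γ t)|) = |θ| := by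
  set d : ℝ → ℝ := fun x => if θ = 0 then 1 else Real.cos (x * θ) * θ / Real.sin θ with hd
  have hderiv : ∀ t : ℝ, deriv γ t = d t • emb n₁ c₁ + (d (1 - t) * (-1)) • emb n₀ c₀ := by
    intro t
    have h1 : HasDerivAt (fun s => lam s θ) (d t) t := hasDerivAt_lam θ t
    have h2 : HasDerivAt (fun s : ℝ => (1 : ℝ) - s) (-1) t := (hasDerivAt_id t).const_sub 1
    have h3 : HasDerivAt (fun s : ℝ => lam (1 - s) θ) (d (1 - t) * (-1)) t :=
      (hasDerivAt_lam θ (1 - t)).comp t h2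
    have hγeq : γ = fun t => lam t θ • emb n₁ c₁ + lam (1 - t) θ • emb n₀ c₀ := funext hγ
    rw [hγeq]
    exact ((h1.smul_const (emb n₁ c₁)).add (h3.smul_const (emb n₀ c₀))).deriv
  have h11 : lorentz (emb n₁ c₁) (emb n₁ c₁) = 1 := by
    rw [lorentz_emb, real_inner_self_eq_norm_sq, hn₁]; norm_num
  have h00 : lorentz (emb n₀ c₀) (emb n₀ c₀) = 1 := by
    rw [lorentz_emb, real_inner_self_eq_norm_sq, hn₀]; norm_num
  have h10 : lorentz (emb n₁ c₁) (emb n₀ c₀) = Real.cos θ := by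
    rw [lorentz_emb, real_inner_comm, ← hcos]
  have key : ∀ t : ℝ, lorentz (deriv γ t) (deriv γ t) = θ ^ 2 := by
    intro t
    rw [hderiv t, lorentz_comb, h11, h00, h10]
    by_cases h : θ = 0
    · simp [hd, h]; norm_num
    · have hs : Real.sin θ ≠ 0 :=
        ne_of_gt (Real.sin_pos_of_pos_of_lt_pi (lt_of_le_of_ne hθ.1 (Ne.symm h)) hθ.2)
      simp only [hd, if_neg h]
      have hAB : t * θ + (1 - t) * θ = θ := by ring
      have := cos_identity (t * θ) ((1 - t) * θ)
      rw [hAB] at this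
      field_simp
      rw [mul_comm θ (1 - t)]
      linear_combination this
  refine ⟨key, ?_⟩
  have : ∀ t : ℝ, Real.sqrt |lorentz (deriv γ t) (deriv γ t)| = |θ| := by
    intro t
    rw [key t, abs_of_nonneg (sq_nonneg θ), Real.sqrt_sq_eq_abs]
  simp only [this]
  simp
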